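/- arXiv:1805.05808 — 2 statements merged into one kernel-verified Lean document; each statement's English description precedes it below -/
import Mathlib

section
/- Let G be a connected graph and 0 ≤ α < 1. Let u, v be vertices and suppose N ⊆ N(v) \ (N(u) ∪ {u}) is nonempty. Let G' be obtained from G by deleting the edges {v,w} for w ∈ N and adding the edges {u,w} for w ∈ N. Let x be a unit Perron eigenvector of A_α(G) with eigenvalue ρ_α(G). If x_u ≥ x_v, then ρ_α(G') > ρ_α(G). -/
open Matrix

/-- The `A_α` matrix of a simple graph: `α·D(G) + (1-α)·A(G)`. -/
noncomputable def Aalpha {V : Type*} [Fintype V] (G : SimpleGraph V) (α : ℝ) :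
    Matrix V V ℝ :=
  letI : DecidableEq V := Classical.decEq V
  letI : DecidableRel G.Adj := Classical.decRel _
  α • Matrix.diagonal (fun v => (G.degree v : ℝ)) + (1 - α) • G.adjMatrix ℝ

/-- The largest real eigenvalue of a matrix (spectral radius for `A_α`-matrices). -/
noncomputable def specRad {V : Type*} [Fintype V] [DecidableEq V] (M : Matrix V V ℝ) : ℝ :=
  sSup {t : ℝ | Module.End.HasEigenvalue (Matrix.toLin' M) t}

section Helpers

set_option linter.unusedSectionVars false

variable {V : Type*} [Fintype V] [DecidableEq V]

lemma inner_euclid (M : Matrix V V ℝ) (y : EuclideanSpace ℝ V) :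
    (inner ℝ ((Matrix.toEuclideanLin M) y) y : ℝ) = ∑ i, (M *ᵥ (fun i => y i)) i * y i := by
  simp [PiLp.inner_apply, toEuclideanLin_apply, mul_comm]

lemma norm_sq_euclid (y : EuclideanSpace ℝ V) : ‖y‖^2 = ∑ i, (y i)^2 := by
  rw [EuclideanSpace.norm_eq, Real.sq_sqrt (Finset.sum_nonneg fun i _ => sq_nonneg _)]; simp [Real.norm_eq_abs, sq_abs]

lemma quadform_le_const (M : Matrix V V ℝ) (y : V → ℝ) :
    ∑ i, (M *ᵥ y) i * y i ≤ (∑ i, ∑ j, |M i j|) * ∑ i, (y i)^2 := by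
  have hs : ∀ k, (y k)^2 ≤ ∑ i, (y i)^2 := fun k =>
    Finset.single_le_sum (f := fun i => (y i)^2) (fun i _ => sq_nonneg _) (Finset.mem_univ k)
  have hss : (0:ℝ) ≤ ∑ i, (y i)^2 := Finset.sum_nonneg fun i _ => sq_nonneg _
  calc ∑ i, (M *ᵥ y) i * y i = ∑ i, ∑ j, M i j * y j * y i := by
        simp [mulVec, dotProduct, Finset.sum_mul]
    _ ≤ ∑ i, ∑ j, |M i j| * ∑ k, (y k)^2 := by
        apply Finset.sum_le_sum; intro i _; apply Finset.sum_le_sum; intro j _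
        have h1 : M i j * y j * y i ≤ |M i j| * (|y j| * |y i|) := by
          calc M i j * y j * y i ≤ |M i j * y j * y i| := le_abs_self _
            _ = |M i j| * (|y j| * |y i|) := by rw [abs_mul, abs_mul]; ring
        refine h1.trans (mul_le_mul_of_nonneg_left ?_ (abs_nonneg _))
        nlinarith [hs i, hs j, abs_nonneg (y i), abs_nonneg (y j), sq_abs (y i), sq_abs (y j)]
    _ = (∑ i, ∑ j, |M i j|) * ∑ i, (y i)^2 := by
        rw [Finset.sum_mul]; exact Finset.sum_congr rfl fun i _ => by rw [Finset.sum_mul]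

variable [Nonempty V]

lemma hasEig_euclid (M : Matrix V V ℝ) (μ : ℝ) :
    Module.End.HasEigenvalue (Matrix.toEuclideanLin M) μ ↔
      Module.End.HasEigenvalue (Matrix.toLin' M) μ := by
  constructor
  · intro h
    obtain ⟨y, hy1, hy0⟩ := h.exists_hasEigenvector
    apply Module.End.hasEigenvalue_of_hasEigenvector (x := WithLp.ofLp y)
    refine ⟨?_, fun hc => hy0 (congrArg (WithLp.toLp 2) hc)⟩
    rw [Module.End.mem_eigenspace_iff] at hy1 ⊢
    exact congrArg WithLp.ofLp hy1
  · intro h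
    obtain ⟨y, hy1, hy0⟩ := h.exists_hasEigenvector
    apply Module.End.hasEigenvalue_of_hasEigenvector (x := WithLp.toLp 2 y)
    refine ⟨?_, fun hc => hy0 (congrArg WithLp.ofLp hc)⟩
    rw [Module.End.mem_eigenspace_iff] at hy1 ⊢
    exact congrArg (WithLp.toLp 2) hy1

lemma specRad_master (M : Matrix V V ℝ) (hM : M.IsHermitian) :
    Module.End.HasEigenvalue (Matrix.toLin' M) (specRad M) ∧
    ∀ w : V → ℝ, ∑ i, (M *ᵥ w) i * w i ≤ specRad M * ∑ i, (w i)^2 := by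
  set T := Matrix.toEuclideanLin M with hT
  have hsym : T.IsSymmetric := Matrix.isHermitian_iff_isSymmetric.mp hM
  set C : ℝ := (∑ i, ∑ j, |M i j|) with hC
  have hray : ∀ z : EuclideanSpace ℝ V, (inner ℝ (T z) z : ℝ) ≤ C * ‖z‖^2 := by
    intro z; rw [inner_euclid, norm_sq_euclid]; exact quadform_le_const M _
  have hbdd : ∀ z : {x : EuclideanSpace ℝ V // x ≠ 0},
      RCLike.re (inner ℝ (T z.1) z.1 : ℝ) / ‖(z : EuclideanSpace ℝ V)‖^2 ≤ C := by
    rintro ⟨z, hz⟩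
    have hz2 : (0:ℝ) < ‖z‖^2 := pow_pos (norm_pos_iff.mpr hz) 2
    rw [div_le_iff₀ hz2]
    simpa using hray z
  have hlam := hsym.hasEigenvalue_iSup_of_finiteDimensional
  set lam : ℝ := (⨆ x : {x : EuclideanSpace ℝ V // x ≠ 0},
      RCLike.re (inner ℝ (T x.1) x.1 : ℝ) / ‖(x : EuclideanSpace ℝ V)‖^2) with hlamdef
  have hglam : IsGreatest {t : ℝ | Module.End.HasEigenvalue (Matrix.toLin' M) t} lam := by
    constructor
    · exact (hasEig_euclid M lam).mp hlam
    · rintro s hs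
      have hs' : Module.End.HasEigenvalue T s := (hasEig_euclid M s).mpr hs
      obtain ⟨y, hy1, hy0⟩ := hs'.exists_hasEigenvector
      have hy2 : (0:ℝ) < ‖y‖^2 := pow_pos (norm_pos_iff.mpr hy0) 2
      have : RCLike.re (inner ℝ (T y) y : ℝ) / ‖y‖^2 = s := by
        rw [Module.End.mem_eigenspace_iff.mp hy1]
        rw [real_inner_smul_left, real_inner_self_eq_norm_sq]
        field_simp
        simp
      rw [← this]
      exact le_ciSup ⟨C, fun r ⟨z, hz⟩ => hz ▸ hbdd z⟩ (⟨y, hy0⟩ : {x : EuclideanSpace ℝ V // x ≠ 0})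
  have h : specRad M = lam := hglam.csSup_eq
  constructor
  · rw [h]; exact hglam.1
  · intro w
    by_cases hw : w = 0
    · simp [hw]
    · let w' : EuclideanSpace ℝ V := WithLp.toLp 2 w
      have hw' : w' ≠ 0 := fun hc => hw (congrArg WithLp.ofLp hc)
      have hb2 : RCLike.re (inner ℝ (T w') w' : ℝ) / ‖w'‖^2 ≤ specRad M := by
        have hb := le_ciSup ⟨C, fun r ⟨z, hz⟩ => hz ▸ hbdd z⟩
          (⟨w', hw'⟩ : {x : EuclideanSpace ℝ V // x ≠ 0})
        rw [← hlamdef, ← h] at hb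
        exact hb
      have hw2 : (0:ℝ) < ‖w'‖^2 := pow_pos (norm_pos_iff.mpr hw') 2
      rw [div_le_iff₀ hw2] at hb2
      have e1 : RCLike.re (inner ℝ (T w') w' : ℝ) = ∑ i, (M *ᵥ w) i * w i := by
        rw [RCLike.re_to_real, inner_euclid]
      have e2 : ‖w'‖^2 = ∑ i, (w i)^2 := norm_sq_euclid w'
      rw [e1, e2] at hb2
      exact hb2

lemma lin_coeff_zero {a b : ℝ} (h : ∀ t : ℝ, a*t^2 + b*t ≤ 0) : b = 0 := by
  by_contra hb
  have hc : (0:ℝ) < |a| + 1 := by positivity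
  have h1 := h (b / (|a| + 1))
  rw [div_pow] at h1
  have hb2 : (0:ℝ) < b^2 := lt_of_le_of_ne (sq_nonneg b) (Ne.symm (pow_ne_zero 2 hb))
  have e1 : a * (b^2/(|a|+1)^2) + b*(b/(|a|+1)) = (b^2/(|a|+1)^2) * (a + (|a|+1)) := by
    field_simp
  rw [e1] at h1
  have : 0 < (b^2/(|a|+1)^2) * (a + (|a|+1)) := by
    apply mul_pos (by positivity)
    have := neg_abs_le a
    linarith
  linarith

lemma eigenvec_of_quadform_eq (M : Matrix V V ℝ) (hM : M.IsHermitian) (z : V → ℝ)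
    (hz : ∑ i, (z i)^2 = 1) (hq : ∑ i, (M *ᵥ z) i * z i = specRad M) :
    M *ᵥ z = specRad M • z := by
  obtain ⟨-, hle⟩ := specRad_master M hM
  set ρ := specRad M with hρ
  have hsymm : ∀ i j, M i j = M j i := fun i j => by
    have := congrFun (congrFun hM j) i
    simpa [Matrix.conjTranspose_apply] using this
  have hB : ∀ y : V → ℝ, ∑ i, (M *ᵥ y) i * z i = ∑ i, (M *ᵥ z) i * y i := by
    intro y
    simp only [mulVec, dotProduct, Finset.sum_mul]
    rw [Finset.sum_comm]
    exact Finset.sum_congr rfl fun i _ => Finset.sum_congr rfl fun j _ => by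
      rw [hsymm j i]; ring
  have key : ∀ y : V → ℝ, ∑ i, (M *ᵥ z) i * y i - ρ * ∑ i, z i * y i = 0 := by
    intro y
    have hq2 : ∀ t : ℝ,
        (∑ i, (M *ᵥ y) i * y i - ρ * ∑ i, (y i)^2) * t^2
          + (2 * (∑ i, (M *ᵥ z) i * y i - ρ * ∑ i, z i * y i)) * t ≤ 0 := by
      intro t
      have h1 := hle (z + t • y)
      have e1 : ∑ i, (M *ᵥ (z + t • y)) i * (z + t • y) i
          = ∑ i, (M *ᵥ z) i * z i + t * ∑ i, (M *ᵥ z) i * y i + t * ∑ i, (M *ᵥ y) i * z i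
            + t^2 * ∑ i, (M *ᵥ y) i * y i := by
        simp only [Matrix.mulVec_add, Matrix.mulVec_smul, Pi.add_apply, Pi.smul_apply,
          smul_eq_mul, Finset.mul_sum]
        rw [← Finset.sum_add_distrib, ← Finset.sum_add_distrib, ← Finset.sum_add_distrib]
        exact Finset.sum_congr rfl fun i _ => by ring
      have e2 : ∑ i, ((z + t • y) i)^2
          = ∑ i, (z i)^2 + 2 * t * ∑ i, z i * y i + t^2 * ∑ i, (y i)^2 := by
        simp only [Pi.add_apply, Pi.smul_apply, smul_eq_mul, Finset.mul_sum]
        rw [← Finset.sum_add_distrib, ← Finset.sum_add_distrib]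
        exact Finset.sum_congr rfl fun i _ => by ring
      rw [e1, e2, hB y, hq, hz] at h1
      nlinarith [h1]
    have := lin_coeff_zero hq2
    linarith
  have hzero := key (fun i => (M *ᵥ z) i - ρ * z i)
  have hsq : ∑ i, ((M *ᵥ z) i - ρ * z i)^2 = 0 := by
    have : ∑ i, ((M *ᵥ z) i - ρ * z i)^2
        = ∑ i, (M *ᵥ z) i * ((M *ᵥ z) i - ρ * z i) - ρ * ∑ i, z i * ((M *ᵥ z) i - ρ * z i) := by
      rw [Finset.mul_sum, ← Finset.sum_sub_distrib]
      exact Finset.sum_congr rfl fun i _ => by ring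
    rw [this]
    simpa using hzero
  funext i
  have := (Finset.sum_eq_zero_iff_of_nonneg (fun i _ => sq_nonneg _)).mp hsq i (Finset.mem_univ i)
  have h0 : (M *ᵥ z) i - ρ * z i = 0 := by
    exact pow_eq_zero_iff (n := 2) (by norm_num) |>.mp this
  simp only [Pi.smul_apply, smul_eq_mul]
  linarith

lemma Aalpha_apply (G : SimpleGraph V) [DecidableRel G.Adj] (α : ℝ) (i j : V) :
    Aalpha G α i j = (if i = j then α * (G.degree i : ℝ) else 0)
      + (1 - α) * (if G.Adj i j then 1 else 0) := by
  unfold Aalpha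
  simp [Matrix.diagonal_apply, Matrix.add_apply, SimpleGraph.adjMatrix_apply, mul_ite]
  congr!

lemma Aalpha_isHermitian (G : SimpleGraph V) (α : ℝ) : (Aalpha G α).IsHermitian := by
  classical
  ext i j
  simp only [Matrix.conjTranspose_apply, star_trivial, Aalpha_apply]
  by_cases h : i = j
  · subst h; rfl
  · rw [if_neg h, if_neg (Ne.symm h), G.adj_comm]

lemma degree_real (G : SimpleGraph V) [DecidableRel G.Adj] (a : V) :
    (G.degree a : ℝ) = ∑ j, (if G.Adj a j then (1:ℝ) else 0) := by
  rw [← SimpleGraph.card_neighborFinset_eq_degree, SimpleGraph.neighborFinset_eq_filter,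
    Finset.card_filter]
  push_cast
  simp

lemma Aalpha_mulVec_apply (G : SimpleGraph V) [DecidableRel G.Adj] (α : ℝ) (y : V → ℝ) (a : V) :
    (Aalpha G α *ᵥ y) a
      = α * (G.degree a : ℝ) * y a + (1 - α) * ∑ j, (if G.Adj a j then y j else 0) := by
  simp only [mulVec, dotProduct, Aalpha_apply, add_mul, Finset.sum_add_distrib, ite_mul, zero_mul,
    one_mul, mul_assoc]
  rw [Finset.sum_ite_eq (Finset.univ) a (fun j => α * ((G.degree a : ℝ) * y j))]
  simp [Finset.mul_sum, mul_ite, mul_assoc]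

lemma quadform_Aalpha (G : SimpleGraph V) [DecidableRel G.Adj] (α : ℝ) (y : V → ℝ) :
    ∑ i, (Aalpha G α *ᵥ y) i * y i
      = ∑ i, ∑ j, (if G.Adj i j then α * (y i)^2 + (1-α) * (y i * y j) else 0) := by
  refine Finset.sum_congr rfl fun i _ => ?_
  rw [Aalpha_mulVec_apply]
  have h1 : ∑ j, (if G.Adj i j then α * (y i)^2 + (1-α) * (y i * y j) else 0)
      = ∑ j, ((if G.Adj i j then α * (y i)^2 else 0)
          + (if G.Adj i j then (1-α) * (y i * y j) else 0)) := by
    refine Finset.sum_congr rfl fun j _ => ?_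
    by_cases h : G.Adj i j <;> simp [h]
  rw [h1, Finset.sum_add_distrib]
  have h2 : ∑ j, (if G.Adj i j then α * (y i)^2 else 0) = α * (G.degree i : ℝ) * (y i)^2 := by
    rw [degree_real, Finset.mul_sum, Finset.sum_mul]
    refine Finset.sum_congr rfl fun j _ => ?_
    by_cases h : G.Adj i j <;> simp [h]
  have h3 : ∑ j, (if G.Adj i j then (1-α) * (y i * y j) else 0)
      = (1-α) * (y i * ∑ j, (if G.Adj i j then y j else 0)) := by
    rw [Finset.mul_sum, Finset.mul_sum]
    refine Finset.sum_congr rfl fun j _ => ?_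
    by_cases h : G.Adj i j <;> simp [h]
  rw [h2, h3]; ring

lemma diff_lemma (G G' : SimpleGraph V) [DecidableRel G.Adj] [DecidableRel G'.Adj]
    (u v : V) (Nf : Finset V) (f : V → V → ℝ)
    (huv : u ≠ v) (huN : u ∉ Nf) (hvN : v ∉ Nf)
    (hNv : ∀ w ∈ Nf, G.Adj v w) (hNu : ∀ w ∈ Nf, ¬ G.Adj u w)
    (hadj' : ∀ i j, G'.Adj i j ↔
      ((G.Adj i j ∧ ¬(i = v ∧ j ∈ Nf) ∧ ¬(j = v ∧ i ∈ Nf)) ∨ (i = u ∧ j ∈ Nf) ∨ (j = u ∧ i ∈ Nf)))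
    (i j : V) :
    (if G'.Adj i j then f i j else 0) - (if G.Adj i j then f i j else 0) =
      ((if j ∈ Nf then (if i = u then f u j else 0) - (if i = v then f v j else 0) else 0)
       + (if i ∈ Nf then (if j = u then f i u else 0) - (if j = v then f i v else 0) else 0)) := by
  have hirr : ∀ a, ¬ G.Adj a a := fun a => G.irrefl
  by_cases hiN : i ∈ Nf <;> by_cases hjN : j ∈ Nf <;>
    by_cases hiu : i = u <;> by_cases hju : j = u <;>
    by_cases hiv : i = v <;> by_cases hjv : j = v <;>
    simp_all [hadj', G.adj_comm]

end Helpers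
/-- Lemma of Nikiforov–Rojo: rotating the edges from `v` to `u`
over a set `N ⊆ N(v) \ (N(u) ∪ {u})` strictly increases the `A_α`-spectral radius,
provided the Perron entry at `u` is at least the one at `v`. -/
theorem specRad_Aalpha_edge_rotation {V : Type*} [Fintype V] [DecidableEq V]
    (G : SimpleGraph V) (hG : G.Connected) (α : ℝ) (h0 : 0 ≤ α) (h1 : α < 1)
    (u v : V) (N : Set V) (hN : N ⊆ G.neighborSet v \ (G.neighborSet u ∪ {u}))
    (hNne : N.Nonempty)
    (x : V → ℝ)
    (hunit : ∑ w, x w ^ 2 = 1) (hnonneg : ∀ w, 0 ≤ x w)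
    (heig : (Aalpha G α).mulVec x = specRad (Aalpha G α) • x)
    (hxuv : x v ≤ x u) :
    specRad (Aalpha G α) <
      specRad (Aalpha
        ((G \ SimpleGraph.fromEdgeSet ((fun w => s(v, w)) '' N)) ⊔
          SimpleGraph.fromEdgeSet ((fun w => s(u, w)) '' N)) α) := by
  classical
  obtain ⟨w0, hw0⟩ := hNne
  haveI : Nonempty V := ⟨w0⟩
  -- basic facts about N
  have hNadj : ∀ w ∈ N, G.Adj v w := fun w hw => (hN hw).1
  have hNnadjU : ∀ w ∈ N, ¬ G.Adj u w := fun w hw => fun hc => (hN hw).2 (Or.inl hc)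
  have hNneU : ∀ w ∈ N, w ≠ u := fun w hw => fun hc => (hN hw).2 (Or.inr hc)
  have huv : u ≠ v := by
    intro h; subst h
    exact hNnadjU w0 hw0 (hNadj w0 hw0)
  have hvN : v ∉ N := fun hc => G.irrefl (hNadj v hc)
  have huN : u ∉ N := fun hc => hNneU u hc rfl
  set Nf : Finset V := N.toFinset with hNf
  have hmemNf : ∀ w, w ∈ Nf ↔ w ∈ N := fun w => Set.mem_toFinset
  set G' : SimpleGraph V :=
    ((G \ SimpleGraph.fromEdgeSet ((fun w => s(v, w)) '' N)) ⊔
      SimpleGraph.fromEdgeSet ((fun w => s(u, w)) '' N)) with hG'def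
  -- adjacency characterization of G'
  have hmem1 : ∀ i j : V, (s(i,j) ∈ (fun w => s(v, w)) '' N) ↔
      ((i = v ∧ j ∈ Nf) ∨ (j = v ∧ i ∈ Nf)) := by
    intro i j
    constructor
    · rintro ⟨w, hwN, hw⟩
      rcases Sym2.eq_iff.mp hw with ⟨h1, h2⟩ | ⟨h1, h2⟩
      · exact Or.inl ⟨h1.symm, (hmemNf j).mpr (h2 ▸ hwN)⟩
      · exact Or.inr ⟨h1.symm, (hmemNf i).mpr (h2 ▸ hwN)⟩
    · rintro (⟨rfl, hj⟩ | ⟨rfl, hi⟩)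
      · exact ⟨j, (hmemNf j).mp hj, rfl⟩
      · exact ⟨i, (hmemNf i).mp hi, Sym2.eq_swap⟩
  have hmem2 : ∀ i j : V, (s(i,j) ∈ (fun w => s(u, w)) '' N) ↔
      ((i = u ∧ j ∈ Nf) ∨ (j = u ∧ i ∈ Nf)) := by
    intro i j
    constructor
    · rintro ⟨w, hwN, hw⟩
      rcases Sym2.eq_iff.mp hw with ⟨h1, h2⟩ | ⟨h1, h2⟩
      · exact Or.inl ⟨h1.symm, (hmemNf j).mpr (h2 ▸ hwN)⟩
      · exact Or.inr ⟨h1.symm, (hmemNf i).mpr (h2 ▸ hwN)⟩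
    · rintro (⟨rfl, hj⟩ | ⟨rfl, hi⟩)
      · exact ⟨j, (hmemNf j).mp hj, rfl⟩
      · exact ⟨i, (hmemNf i).mp hi, Sym2.eq_swap⟩
  have hNfadj : ∀ w ∈ Nf, G.Adj v w := fun w hw => hNadj w ((hmemNf w).mp hw)
  have hNfnadjU : ∀ w ∈ Nf, ¬ G.Adj u w := fun w hw => hNnadjU w ((hmemNf w).mp hw)
  have huNf : u ∉ Nf := fun hc => huN ((hmemNf u).mp hc)
  have hvNf : v ∉ Nf := fun hc => hvN ((hmemNf v).mp hc)
  have hne_of : ∀ i j : V, ((i = u ∧ j ∈ Nf) ∨ (j = u ∧ i ∈ Nf)) → i ≠ j := by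
    rintro i j (⟨rfl, hj⟩ | ⟨rfl, hi⟩)
    · exact fun hc => huNf (hc ▸ hj)
    · exact fun hc => huNf (hc ▸ hi)
  have hadj' : ∀ i j, G'.Adj i j ↔
      ((G.Adj i j ∧ ¬(i = v ∧ j ∈ Nf) ∧ ¬(j = v ∧ i ∈ Nf))
        ∨ (i = u ∧ j ∈ Nf) ∨ (j = u ∧ i ∈ Nf)) := by
    intro i j
    rw [hG'def, SimpleGraph.sup_adj, SimpleGraph.sdiff_adj, SimpleGraph.fromEdgeSet_adj,
      SimpleGraph.fromEdgeSet_adj, hmem1, hmem2]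
    constructor
    · rintro (⟨hA, hn⟩ | ⟨hm, -⟩)
      · exact Or.inl ⟨hA, fun hc => hn ⟨Or.inl hc, hA.ne⟩, fun hc => hn ⟨Or.inr hc, hA.ne⟩⟩
      · exact Or.inr hm
    · rintro (⟨hA, hn1, hn2⟩ | hm)
      · exact Or.inl ⟨hA, fun hc => hc.1.elim hn1 hn2⟩
      · exact Or.inr ⟨hm, hne_of i j hm⟩
  -- matrices
  set M : Matrix V V ℝ := Aalpha G α with hM
  set M' : Matrix V V ℝ := Aalpha G' α with hM'
  have hMh : M.IsHermitian := Aalpha_isHermitian G α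
  have hM'h : M'.IsHermitian := Aalpha_isHermitian G' α
  set ρ : ℝ := specRad M with hρ
  set ρ' : ℝ := specRad M' with hρ'
  -- positivity of x
  have hadj0 : ∀ a b, G.Adj a b → x a = 0 → x b = 0 := by
    intro a b hab ha
    have h := congrFun heig a
    rw [Aalpha_mulVec_apply] at h
    simp only [Pi.smul_apply, smul_eq_mul] at h
    rw [ha] at h
    have h1α : (0:ℝ) < 1 - α := by linarith
    have hsumz : ∑ j, (if G.Adj a j then x j else 0) = 0 := by
      have h2 : (1 - α) * ∑ j, (if G.Adj a j then x j else 0) = 0 := by linarith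
      exact (mul_eq_zero.mp h2).resolve_left (ne_of_gt h1α)
    have hterm := (Finset.sum_eq_zero_iff_of_nonneg (fun j _ => by
      by_cases hj : G.Adj a j <;> simp [hj, hnonneg j])).mp hsumz b (Finset.mem_univ b)
    rw [if_pos hab] at hterm
    exact hterm
  have hreach : ∀ a b, G.Reachable a b → x a = 0 → x b = 0 := by
    intro a b hr
    obtain ⟨p⟩ := hr
    induction p with
    | nil => exact fun h => h
    | cons h q ih => exact fun ha => ih (hadj0 _ _ h ha)
  have hxpos : ∀ w, 0 < x w := by
    intro w
    rcases (hnonneg w).lt_or_eq with h | h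
    · exact h
    · exfalso
      have hz : ∀ z, x z = 0 := fun z => hreach w z (hG.preconnected w z) h.symm
      rw [Finset.sum_congr rfl (fun i _ => by rw [hz i])] at hunit
      simp at hunit
  -- Q(G,x) = ρ
  have hsq1 : ∑ i, x i * x i = 1 := by
    rw [← hunit]; exact Finset.sum_congr rfl fun i _ => (sq (x i)).symm
  have hQx : ∑ i, (M *ᵥ x) i * x i = ρ := by
    rw [heig]
    simp only [Pi.smul_apply, smul_eq_mul]
    rw [show ∑ i, ρ * x i * x i = ρ * ∑ i, x i * x i from by
      rw [Finset.mul_sum]; exact Finset.sum_congr rfl fun i _ => by ring]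
    rw [hsq1, mul_one]
  -- quadratic form difference
  set f : V → V → ℝ := fun a b => α * (x a)^2 + (1-α) * (x a * x b) with hf
  have hQG : ∑ i, (M *ᵥ x) i * x i = ∑ i, ∑ j, (if G.Adj i j then f i j else 0) :=
    quadform_Aalpha G α x
  have hQG' : ∑ i, (M' *ᵥ x) i * x i = ∑ i, ∑ j, (if G'.Adj i j then f i j else 0) :=
    quadform_Aalpha G' α x
  have hdiff := diff_lemma G G' u v Nf f huv huNf hvNf hNfadj hNfnadjU hadj'
  have hQdiff : (∑ i, (M' *ᵥ x) i * x i) - (∑ i, (M *ᵥ x) i * x i)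
      = ∑ w ∈ Nf, ((f u w - f v w) + (f w u - f w v)) := by
    rw [hQG, hQG', ← Finset.sum_sub_distrib]
    rw [Finset.sum_congr rfl (fun i _ => by
      rw [← Finset.sum_sub_distrib,
        Finset.sum_congr rfl (fun j _ => hdiff i j)])]
    simp only [Finset.sum_add_distrib]
    have hS1 : ∑ i, ∑ j, (if j ∈ Nf then (if i = u then f u j else 0)
          - (if i = v then f v j else 0) else 0)
        = ∑ w ∈ Nf, (f u w - f v w) := by
      rw [Finset.sum_comm]
      have e1 : ∀ j, ∑ i, (if j ∈ Nf then (if i = u then f u j else 0)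
            - (if i = v then f v j else 0) else 0)
          = if j ∈ Nf then (f u j - f v j) else 0 := by
        intro j
        by_cases h : j ∈ Nf
        · simp only [if_pos h]
          rw [Finset.sum_sub_distrib, Finset.sum_ite_eq' Finset.univ u fun i => f u j,
            Finset.sum_ite_eq' Finset.univ v fun i => f v j]
          simp
        · simp [h]
      rw [Finset.sum_congr rfl fun j _ => e1 j, Finset.sum_ite_mem, Finset.univ_inter]
    have hS2 : ∑ i, ∑ j, (if i ∈ Nf then (if j = u then f i u else 0)
          - (if j = v then f i v else 0) else 0)
        = ∑ w ∈ Nf, (f w u - f w v) := by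
      have e2 : ∀ i, ∑ j, (if i ∈ Nf then (if j = u then f i u else 0)
            - (if j = v then f i v else 0) else 0)
          = if i ∈ Nf then (f i u - f i v) else 0 := by
        intro i
        by_cases h : i ∈ Nf
        · simp only [if_pos h]
          rw [Finset.sum_sub_distrib, Finset.sum_ite_eq' Finset.univ u fun j => f i u,
            Finset.sum_ite_eq' Finset.univ v fun j => f i v]
          simp
        · simp [h]
      rw [Finset.sum_congr rfl fun i _ => e2 i, Finset.sum_ite_mem, Finset.univ_inter]
    rw [hS1, hS2, ← Finset.sum_add_distrib]
  have hΔnonneg : (0:ℝ) ≤ ∑ w ∈ Nf, ((f u w - f v w) + (f w u - f w v)) := by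
    refine Finset.sum_nonneg fun w _ => ?_
    have h1 : (f u w - f v w) + (f w u - f w v)
        = α * ((x u)^2 - (x v)^2) + 2 * (1-α) * (x w * (x u - x v)) := by
      simp only [hf]; ring
    rw [h1]
    have h2 : (0:ℝ) ≤ (x u)^2 - (x v)^2 := by
      nlinarith [hnonneg v, hnonneg u, hxuv]
    have h3 : (0:ℝ) ≤ x w * (x u - x v) := mul_nonneg (hnonneg w) (by linarith)
    nlinarith
  -- chain of inequalities
  obtain ⟨-, hle'⟩ := specRad_master M' hM'h
  have hQ'le : ∑ i, (M' *ᵥ x) i * x i ≤ ρ' := by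
    have := hle' x
    rw [hunit, mul_one] at this
    exact this
  have hρle : ρ ≤ ρ' := by
    have := hQdiff
    nlinarith [hQ'le, hQx, hΔnonneg, hQdiff]
  by_contra hcon
  push_neg at hcon
  have hρeq : ρ' = ρ := le_antisymm hcon hρle
  have hQ'eq : ∑ i, (M' *ᵥ x) i * x i = ρ' := by
    nlinarith [hQ'le, hQx, hΔnonneg, hQdiff, hρeq]
  have heig' : M' *ᵥ x = ρ' • x := eigenvec_of_quadform_eq M' hM'h x hunit hQ'eq
  -- compare coordinate u
  have huadj : ∀ j, G'.Adj u j ↔ (G.Adj u j ∨ j ∈ Nf) := by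
    intro j
    rw [hadj' u j]
    constructor
    · rintro (⟨h, -, -⟩ | ⟨-, hj⟩ | ⟨hj, hu⟩)
      · exact Or.inl h
      · exact Or.inr hj
      · exact absurd hu huNf
    · rintro (h | h)
      · exact Or.inl ⟨h, fun hc => huv hc.1, fun hc => huNf hc.2⟩
      · exact Or.inr (Or.inl ⟨rfl, h⟩)
  have hsplit : ∀ (g : V → ℝ), ∑ j, (if G'.Adj u j then g j else 0)
      = ∑ j, (if G.Adj u j then g j else 0) + ∑ j, (if j ∈ Nf then g j else 0) := by
    intro g
    rw [← Finset.sum_add_distrib]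
    refine Finset.sum_congr rfl fun j _ => ?_
    by_cases hj : j ∈ Nf
    · have hnadj : ¬ G.Adj u j := hNfnadjU j hj
      have : G'.Adj u j := (huadj j).mpr (Or.inr hj)
      simp [this, hnadj, hj]
    · by_cases hA : G.Adj u j
      · have : G'.Adj u j := (huadj j).mpr (Or.inl hA)
        simp [this, hA, hj]
      · have : ¬ G'.Adj u j := fun hc => ((huadj j).mp hc).elim hA hj
        simp [this, hA, hj]
  have hdeg' : (G'.degree u : ℝ) = (G.degree u : ℝ) + ∑ j, (if j ∈ Nf then (1:ℝ) else 0) := by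
    rw [degree_real G' u, degree_real G u, hsplit (fun _ => (1:ℝ))]
  have hSif : ∑ j, (if j ∈ Nf then x j else 0) = ∑ j ∈ Nf, x j := by
    rw [Finset.sum_ite_mem, Finset.univ_inter]
  have hSif1 : ∑ j, (if j ∈ Nf then (1:ℝ) else 0) = ∑ j ∈ Nf, (1:ℝ) := by
    rw [Finset.sum_ite_mem, Finset.univ_inter]
  have hrow : (M' *ᵥ x) u - (M *ᵥ x) u = ∑ j ∈ Nf, (α * x u + (1-α) * x j) := by
    rw [Aalpha_mulVec_apply G' α x u, Aalpha_mulVec_apply G α x u, hdeg',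
      hsplit (fun j => x j), hSif, hSif1]
    rw [Finset.sum_add_distrib]
    simp only [← Finset.mul_sum, Finset.sum_const, nsmul_eq_mul, mul_one]
    ring
  have hrow0 : (M' *ᵥ x) u - (M *ᵥ x) u = 0 := by
    rw [heig', heig]
    simp only [Pi.smul_apply, smul_eq_mul]
    rw [hρeq]
    ring
  have hNfne : Nf.Nonempty := ⟨w0, (hmemNf w0).mpr hw0⟩
  have hpos : (0:ℝ) < ∑ j ∈ Nf, (α * x u + (1-α) * x j) := by
    refine Finset.sum_pos (fun j _ => ?_) hNfne
    have := hxpos j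
    have := hnonneg u
    nlinarith
  rw [hrow] at hrow0
  linarith
end

section
/- Let G be a connected graph containing a pendent path with vertices v_1, v_2, ..., v_k labelled from the leaf v_1 inward (so d(v_1)=1 and d(v_i)=2 for 2 ≤ i ≤ k−1). Let 0 ≤ α < 1, suppose ρ_α(G) > 2, and let x be a positive Perron eigenvector of A_α(G). Then x_{v_i} < x_{v_{i+1}} for all 1 ≤ i ≤ k−1. -/
open Matrix

lemma degree_instance_eq {V : Type*} [Fintype V] (G : SimpleGraph V) (w : V)
    (i1 i2 : Fintype (G.neighborSet w)) :
    @SimpleGraph.degree V G w i1 = @SimpleGraph.degree V G w i2 := by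
  rw [← @SimpleGraph.card_neighborSet_eq_degree V G w i1,
    ← @SimpleGraph.card_neighborSet_eq_degree V G w i2]
  congr!

lemma Aalpha_eq {V : Type*} [Fintype V] [DecidableEq V] (G : SimpleGraph V)
    [DecidableRel G.Adj] (α : ℝ) :
    Aalpha G α = α • Matrix.diagonal (fun v => (G.degree v : ℝ)) + (1 - α) • G.adjMatrix ℝ := by
  unfold Aalpha
  ext i j
  simp only [Matrix.add_apply, Matrix.smul_apply, smul_eq_mul, Matrix.diagonal_apply,
    SimpleGraph.adjMatrix_apply]
  by_cases hij : i = j <;> by_cases h : G.Adj i j <;> simp [hij, h] <;>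
    exact Or.inl (degree_instance_eq G i _ _)

/-- along a pendent path `v_1 v_2 ⋯ v_k` (labelled from the leaf inward)
of a connected graph with `ρ_α(G) > 2`, the entries of the Perron vector strictly
increase. -/
theorem perron_increasing_on_pendent_path {V : Type*} [Fintype V] [DecidableEq V]
    (G : SimpleGraph V) [DecidableRel G.Adj] (hG : G.Connected)
    (α : ℝ) (h0 : 0 ≤ α) (h1 : α < 1)
    (k : ℕ) (v : Fin k → V) (hinj : Function.Injective v)
    (hadj : ∀ i j : Fin k, i.val + 1 = j.val → G.Adj (v i) (v j))
    (hleaf : ∀ i : Fin k, i.val = 0 → G.degree (v i) = 1)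
    (hinternal : ∀ i : Fin k, 0 < i.val → i.val < k - 1 → G.degree (v i) = 2)
    (hρ : 2 < specRad (Aalpha G α))
    (x : V → ℝ) (hpos : ∀ w, 0 < x w)
    (heig : (Aalpha G α).mulVec x = specRad (Aalpha G α) • x) :
    ∀ i j : Fin k, i.val + 1 = j.val → x (v i) < x (v j) := by
  set ρ := specRad (Aalpha G α) with hρdef
  have hα : (0:ℝ) < 1 - α := by linarith
  have key : ∀ u : V,
      α * (G.degree u : ℝ) * x u + (1 - α) * ∑ w ∈ G.neighborFinset u, x w = ρ * x u := by
    intro u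
    have h := congrFun heig u
    rw [Aalpha_eq] at h
    simpa [Matrix.add_mulVec, Matrix.smul_mulVec, Matrix.mulVec_diagonal,
      SimpleGraph.adjMatrix_mulVec_apply, mul_assoc] using h
  suffices H : ∀ n, ∀ i j : Fin k, i.val = n → i.val + 1 = j.val → x (v i) < x (v j) by
    exact fun i j h => H i.val i j rfl h
  intro n
  induction n with
  | zero =>
    intro i j hi hij
    have hd := hleaf i hi
    have hmem : v j ∈ G.neighborFinset (v i) := by
      simpa [SimpleGraph.mem_neighborFinset] using hadj i j hij
    have hcard : (G.neighborFinset (v i)).card = 1 := by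
      rw [SimpleGraph.card_neighborFinset_eq_degree, hd]
    obtain ⟨a, ha⟩ := Finset.card_eq_one.mp hcard
    have hav : a = v j := by
      rw [ha, Finset.mem_singleton] at hmem
      exact hmem.symm
    have hk := key (v i)
    rw [ha, hav, hd] at hk
    simp only [Finset.sum_singleton, Nat.cast_one] at hk
    have h1 := hpos (v i)
    nlinarith [hpos (v j)]
  | succ n IH =>
    intro i j hi hij
    have hn : n < k := by have := i.isLt; omega
    set i' : Fin k := ⟨n, hn⟩ with hi'
    have hprev : x (v i') < x (v i) := IH i' i rfl (by rw [hi])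
    have hd : G.degree (v i) = 2 := hinternal i (by omega) (by have := j.isLt; omega)
    have hadj1 : G.Adj (v i') (v i) := hadj i' i (by rw [hi])
    have hadj2 : G.Adj (v i) (v j) := hadj i j hij
    have hne : v i' ≠ v j := by
      intro h
      have := hinj h
      have h2 : n = j.val := congrArg Fin.val this
      omega
    have hsub : ({v i', v j} : Finset V) ⊆ G.neighborFinset (v i) := by
      intro w hw
      simp only [Finset.mem_insert, Finset.mem_singleton] at hw
      rcases hw with rfl | rfl
      · simpa [SimpleGraph.mem_neighborFinset] using hadj1.symm
      · simpa [SimpleGraph.mem_neighborFinset] using hadj2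
    have hpaircard : ({v i', v j} : Finset V).card = 2 := by
      rw [Finset.card_insert_of_notMem (by simpa using hne), Finset.card_singleton]
    have hN : ({v i', v j} : Finset V) = G.neighborFinset (v i) := by
      apply Finset.eq_of_subset_of_card_le hsub
      rw [SimpleGraph.card_neighborFinset_eq_degree, hd, hpaircard]
    have hk := key (v i)
    rw [← hN, Finset.sum_pair hne, hd] at hk
    have h1 := hpos (v i)
    have h2 := hpos (v i')
    push_cast at hk
    nlinarith [hpos (v j)]
end
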